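/- Order-statistic pruning lemma (core of Theorem 1): let x, y : Fin d → ℝ, let m and r be indices with m + r < d, and suppose the (m)-th smallest value among the coordinates of y is strictly greater than the (m+r)-th smallest value among the coordinates of x (0-indexed order statistics of the sorted coordinate multisets). Then the number of coordinates j with y j ≤ x j is at most m + (d - 1 - (m + r)) = d - r - 1. -/

import Mathlib

noncomputable def sortedCoords {d : ℕ} (u : Fin d → ℝ) : List ℝ :=
  (List.ofFn u).insertionSort (· ≤ ·)

lemma card_filter_eq_countP {d : ℕ} (u : Fin d → ℝ) (p : ℝ → Prop) [DecidablePred p] :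
    (Finset.univ.filter (fun j => p (u j))).card = (List.ofFn u).countP (fun a => decide (p a)) := by
  rw [← Multiset.coe_countP, ← Fin.univ_val_map u, Multiset.countP_map]
  rfl

lemma sorted_getElem_le {l : List ℝ} (hs : l.Pairwise (· ≤ ·)) {i j : ℕ} (hij : i ≤ j)
    (hj : j < l.length) : l[i]'(lt_of_le_of_lt hij hj) ≤ l[j] := by
  have := hs.rel_get_of_le (a := ⟨i, lt_of_le_of_lt hij hj⟩) (b := ⟨j, hj⟩) hij
  simpa using this

lemma countP_lt_le {l : List ℝ} (hs : l.Pairwise (· ≤ ·)) {k : ℕ} (hk : k < l.length) :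
    l.countP (fun a => decide (a < l[k])) ≤ k := by
  have h := List.countP_append (l₁ := l.take k) (l₂ := l.drop k) (p := fun a => decide (a < l[k]))
  rw [List.take_append_drop] at h
  rw [h]
  have h2 : (l.drop k).countP (fun a => decide (a < l[k])) = 0 := by
    rw [List.countP_eq_zero]
    intro a ha
    simp only [decide_eq_true_eq, not_lt]
    obtain ⟨i, hil, hi⟩ := List.getElem_of_mem ha
    rw [← hi, List.getElem_drop]
    exact sorted_getElem_le hs (Nat.le_add_right _ _) (by simp [List.length_drop] at hil; omega)
  rw [h2, Nat.add_zero]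
  calc (l.take k).countP _ ≤ (l.take k).length := List.countP_le_length
    _ ≤ k := by simp

lemma countP_gt_le {l : List ℝ} (hs : l.Pairwise (· ≤ ·)) {k : ℕ} (hk : k < l.length) :
    l.countP (fun a => decide (l[k] < a)) ≤ l.length - 1 - k := by
  have h := List.countP_append (l₁ := l.take (k+1)) (l₂ := l.drop (k+1))
      (p := fun a => decide (l[k] < a))
  rw [List.take_append_drop] at h
  rw [h]
  have h2 : (l.take (k+1)).countP (fun a => decide (l[k] < a)) = 0 := by
    rw [List.countP_eq_zero]
    intro a ha
    simp only [decide_eq_true_eq, not_lt]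
    obtain ⟨i, hil, hi⟩ := List.getElem_of_mem ha
    rw [← hi, List.getElem_take]
    exact sorted_getElem_le hs (by simp [List.length_take] at hil; omega) hk
  rw [h2, Nat.zero_add]
  calc (l.drop (k+1)).countP _ ≤ (l.drop (k+1)).length := List.countP_le_length
    _ ≤ l.length - 1 - k := by simp; omega

theorem order_statistic_pruning {d : ℕ} (x y : Fin d → ℝ) (m r : ℕ)
    (hmr : m + r < d)
    (hgt : (sortedCoords x)[m + r]'(by
        simpa [sortedCoords, List.length_insertionSort, List.length_ofFn] using hmr)
      < (sortedCoords y)[m]'(by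
        simp only [sortedCoords, List.length_insertionSort, List.length_ofFn]; omega)) :
    (Finset.univ.filter (fun j => y j ≤ x j)).card ≤ m + (d - 1 - (m + r)) := by
  classical
  have hlx : (sortedCoords x).length = d := by
    simp [sortedCoords]
  have hly : (sortedCoords y).length = d := by
    simp [sortedCoords]
  set t := (sortedCoords x)[m + r]'(by omega) with ht
  set s := (sortedCoords y)[m]'(by omega) with hsdef
  have hsub : (Finset.univ.filter (fun j => y j ≤ x j)) ⊆
      (Finset.univ.filter (fun j => y j < s)) ∪ (Finset.univ.filter (fun j => t < x j)) := by
    intro j hj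
    simp only [Finset.mem_filter, Finset.mem_union, Finset.mem_univ, true_and] at hj ⊢
    by_cases hc : y j < s
    · exact Or.inl hc
    · exact Or.inr (lt_of_lt_of_le hgt (le_trans (not_lt.mp hc) hj))
  have hperm_y : (List.ofFn y).Perm (sortedCoords y) := (List.perm_insertionSort _ _).symm
  have hperm_x : (List.ofFn x).Perm (sortedCoords x) := (List.perm_insertionSort _ _).symm
  have hsort_y : (sortedCoords y).Pairwise (· ≤ ·) := List.pairwise_insertionSort _ _
  have hsort_x : (sortedCoords x).Pairwise (· ≤ ·) := List.pairwise_insertionSort _ _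
  have h1 : (Finset.univ.filter (fun j => y j < s)).card ≤ m := by
    rw [card_filter_eq_countP y (fun a => a < s), hperm_y.countP_eq]
    exact countP_lt_le hsort_y (by omega)
  have h2 : (Finset.univ.filter (fun j => t < x j)).card ≤ d - 1 - (m + r) := by
    rw [card_filter_eq_countP x (fun a => t < a), hperm_x.countP_eq]
    exact (countP_gt_le hsort_x (k := m + r) (by omega)).trans_eq (by rw [hlx])
  calc (Finset.univ.filter (fun j => y j ≤ x j)).card
      ≤ ((Finset.univ.filter (fun j => y j < s)) ∪ (Finset.univ.filter (fun j => t < x j))).card :=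
        Finset.card_le_card hsub
    _ ≤ _ := le_trans (Finset.card_union_le _ _) (Nat.add_le_add h1 h2)
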